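/- Let K be a field of prime characteristic p, E = ⟨X,Y⟩ the natural representation of SL_2(K), and l ≥ 0. If there exists a with 0 ≤ a ≤ l such that C(l,a) ≡ 0 mod p, then the SL_2(K)-representations Sym^l E and Sym_l E are not isomorphic, provided |K| > 1 + 2l. -/

import Mathlib

open scoped TensorProduct

noncomputable section

variable (K : Type*) [Field K]

/-- The subspace of `E^{⊗l}` spanned by the elements `w·σ - w` (place
permutation action of `S_l`). -/
def symRel (V : Type*) [AddCommGroup V] [Module K V] (l : ℕ) :
    Submodule K (⨂[K]^l V) :=
  Submodule.span K
    {x | ∃ (w : ⨂[K]^l V) (σ : Equiv.Perm (Fin l)),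
      x = PiTensorProduct.reindex K (fun _ => V) σ w - w}

/-- The quotient symmetric power `Sym^l V`. -/
def SymQ (V : Type*) [AddCommGroup V] [Module K V] (l : ℕ) : Type _ :=
  (⨂[K]^l V) ⧸ symRel K V l

instance (V : Type*) [AddCommGroup V] [Module K V] (l : ℕ) :
    AddCommGroup (SymQ K V l) :=
  inferInstanceAs (AddCommGroup ((⨂[K]^l V) ⧸ symRel K V l))

instance (V : Type*) [AddCommGroup V] [Module K V] (l : ℕ) :
    Module K (SymQ K V l) :=
  inferInstanceAs (Module K ((⨂[K]^l V) ⧸ symRel K V l))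

/-- The invariant symmetric power `Sym_l V ⊆ V^{⊗l}`. -/
def SymInv (V : Type*) [AddCommGroup V] [Module K V] (l : ℕ) :
    Submodule K (⨂[K]^l V) :=
  ⨅ σ : Equiv.Perm (Fin l),
    LinearMap.eqLocus (PiTensorProduct.reindex K (fun _ => V) σ).toLinearMap LinearMap.id

/-- The diagonal action of `g ∈ SL_2(K)` on `E^{⊗l}`, where `E = K²` is the
natural module. -/
def Tmap (l : ℕ) (g : Matrix.SpecialLinearGroup (Fin 2) K) :
    (⨂[K]^l (Fin 2 → K)) →ₗ[K] ⨂[K]^l (Fin 2 → K) :=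
  PiTensorProduct.map
    (fun _ : Fin l => Matrix.mulVecLin (↑g : Matrix (Fin 2) (Fin 2) K))

/-! ### Auxiliary material for the proof of `stmt11` -/

section Aux

variable (l : ℕ)

/-- The weight (number of `1`-entries) of `f : Fin l → Fin 2`. -/
def wtS (f : Fin l → Fin 2) : ℕ := (Finset.univ.filter fun i => f i = 1).card

/-- Basis-type tensors in `E^{⊗l}` indexed by functions `Fin l → Fin 2`. -/
def bTS (f : Fin l → Fin 2) : ⨂[K]^l (Fin 2 → K) :=
  PiTensorProduct.tprod K fun i => Pi.basisFun K (Fin 2) (f i)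

/-- The coordinate functional dual to `bTS`. -/
def psiS (f : Fin l → Fin 2) : (⨂[K]^l (Fin 2 → K)) →ₗ[K] K :=
  PiTensorProduct.lift
    ((MultilinearMap.mkPiAlgebra K (Fin l) K).compLinearMap
      (fun i => LinearMap.proj (f i)))

/-- The `0/1`-function attached to a set. -/
def chiS (S : Finset (Fin l)) : Fin l → Fin 2 := fun i => if i ∈ S then 1 else 0

lemma fin2_cases (j : Fin 2) : j = 0 ∨ j = 1 := by omega

lemma basisFun_eval (j k : Fin 2) :
    (Pi.basisFun K (Fin 2) j) k = if k = j then 1 else 0 := by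
  simp [Pi.basisFun_apply, Pi.single_apply]

lemma psiS_tprod (f : Fin l → Fin 2) (v : Fin l → (Fin 2 → K)) :
    psiS K l f (PiTensorProduct.tprod K v) = ∏ i, v i (f i) := by
  simp [psiS, MultilinearMap.compLinearMap_apply, MultilinearMap.mkPiAlgebra_apply]

lemma psiS_bT (f g : Fin l → Fin 2) :
    psiS K l f (bTS K l g) = if f = g then 1 else 0 := by
  rw [bTS, psiS_tprod]
  by_cases h : f = g
  · subst h; simp [basisFun_eval]
  · rw [if_neg h]
    obtain ⟨i, hi⟩ := Function.ne_iff.mp h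
    refine Finset.prod_eq_zero (Finset.mem_univ i) ?_
    rw [basisFun_eval, if_neg hi]

lemma tprod_expand (v : Fin l → (Fin 2 → K)) :
    (PiTensorProduct.tprod K v : ⨂[K]^l (Fin 2 → K)) =
      ∑ f : Fin l → Fin 2, (∏ i, v i (f i)) • bTS K l f := by
  have hv : v = fun i => ∑ j : Fin 2, v i j • Pi.basisFun K (Fin 2) j := by
    funext i k
    simp [Fin.sum_univ_two, basisFun_eval, Pi.single_apply]
  conv_lhs => rw [hv]
  rw [MultilinearMap.map_sum]
  refine Finset.sum_congr rfl fun f _ => ?_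
  rw [MultilinearMap.map_smul_univ]
  rfl

lemma ext_bT {M : Type*} [AddCommGroup M] [Module K M]
    (φ₁ φ₂ : (⨂[K]^l (Fin 2 → K)) →ₗ[K] M)
    (h : ∀ f, φ₁ (bTS K l f) = φ₂ (bTS K l f)) : φ₁ = φ₂ := by
  apply LinearMap.ext_on PiTensorProduct.span_tprod_eq_top
  rintro x ⟨v, rfl⟩
  rw [tprod_expand, map_sum, map_sum]
  exact Finset.sum_congr rfl fun f _ => by rw [map_smul, map_smul, h f]

lemma repr_expand (x : ⨂[K]^l (Fin 2 → K)) :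
    x = ∑ f : Fin l → Fin 2, psiS K l f x • bTS K l f := by
  have : LinearMap.id (R := K) (M := ⨂[K]^l (Fin 2 → K)) =
      ∑ f : Fin l → Fin 2, (psiS K l f).smulRight (bTS K l f) := by
    refine ext_bT K l _ _ fun g => ?_
    simp only [LinearMap.id_apply, LinearMap.sum_apply, LinearMap.smulRight_apply, psiS_bT,
      ite_smul, one_smul, zero_smul]
    rw [Finset.sum_ite_eq' (Finset.univ) g (fun f => bTS K l f), if_pos (Finset.mem_univ g)]
  conv_lhs => rw [← LinearMap.id_apply (R := K) x, this]
  simp [LinearMap.sum_apply]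

lemma mulVecLin_diag (t : K) (j : Fin 2) :
    Matrix.mulVecLin !![t, 0; 0, t⁻¹] (Pi.basisFun K (Fin 2) j)
      = (if j = 0 then t else t⁻¹) • Pi.basisFun K (Fin 2) j := by
  funext k
  rcases fin2_cases j with rfl | rfl <;> rcases fin2_cases k with rfl | rfl <;>
    simp [Matrix.mulVecLin_apply, Matrix.mulVec, dotProduct, Fin.sum_univ_two,
      Pi.basisFun_apply, Pi.single_apply]

lemma mulVecLin_unip (j : Fin 2) :
    Matrix.mulVecLin !![(1:K), 1; 0, 1] (Pi.basisFun K (Fin 2) j)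
      = (if j = 1 then Pi.basisFun K (Fin 2) 1 else 0) + Pi.basisFun K (Fin 2) 0 := by
  funext k
  rcases fin2_cases j with rfl | rfl <;> rcases fin2_cases k with rfl | rfl <;>
    simp [Matrix.mulVecLin_apply, Matrix.mulVec, dotProduct, Fin.sum_univ_two,
      Pi.basisFun_apply, Pi.single_apply]

lemma wt_chiS (S : Finset (Fin l)) : wtS l (chiS l S) = S.card := by
  unfold wtS chiS
  congr 1
  ext i
  simp only [Finset.mem_filter, Finset.mem_univ, true_and]
  split <;> simp_all

lemma wt_le (f : Fin l → Fin 2) : wtS l f ≤ l := by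
  have := Finset.card_filter_le (Finset.univ : Finset (Fin l)) (fun i => f i = 1)
  simpa [wtS] using this

lemma wt_eq_zero_iff (f : Fin l → Fin 2) : wtS l f = 0 ↔ f = chiS l ∅ := by
  constructor
  · intro h
    funext i
    have h2 : Finset.univ.filter (fun i => f i = 1) = ∅ := Finset.card_eq_zero.mp h
    have : f i ≠ 1 := by
      intro hfi
      have : i ∈ Finset.univ.filter (fun i => f i = 1) := by
        simp [hfi]
      rw [h2] at this
      exact absurd this (Finset.notMem_empty i)
    have : f i = 0 := by omega
    simp [chiS, this]
  · intro h
    rw [h, wt_chiS, Finset.card_empty]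

lemma Tmap_diag (t : K) (g : Matrix.SpecialLinearGroup (Fin 2) K)
    (hg : (↑g : Matrix (Fin 2) (Fin 2) K) = !![t, 0; 0, t⁻¹]) (f : Fin l → Fin 2) :
    Tmap K l g (bTS K l f)
      = (t ^ (l - wtS l f) * t⁻¹ ^ (wtS l f)) • bTS K l f := by
  rw [Tmap, bTS, PiTensorProduct.map_tprod]
  have h1 : (fun i => Matrix.mulVecLin (↑g : Matrix (Fin 2) (Fin 2) K)
      (Pi.basisFun K (Fin 2) (f i)))
      = fun i => (if f i = 0 then t else t⁻¹) • Pi.basisFun K (Fin 2) (f i) := by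
    funext i; rw [hg, mulVecLin_diag]
  rw [h1, MultilinearMap.map_smul_univ]
  congr 1
  rw [Finset.prod_ite, Finset.prod_const, Finset.prod_const]
  have h2 : Finset.univ.filter (fun i => f i = 0) = Finset.univ.filter (fun i => ¬ f i = 1) := by
    apply Finset.filter_congr; intro i _; constructor <;> intro h <;> omega
  have h3 := Finset.card_filter_add_card_filter_not
    (s := (Finset.univ : Finset (Fin l))) (p := fun i => f i = 1)
  have h4 : (Finset.univ.filter (fun i => f i = 0)).card = l - wtS l f := by
    rw [h2]; unfold wtS; simp only [Finset.card_univ, Fintype.card_fin] at h3; omega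
  rw [h4]
  congr 1
  have h5 : Finset.univ.filter (fun i => ¬ f i = 0) = Finset.univ.filter (fun i => f i = 1) := by
    apply Finset.filter_congr; intro i _; constructor <;> intro h <;> omega
  rw [h5]; rfl

lemma Tmap_unip (g : Matrix.SpecialLinearGroup (Fin 2) K)
    (hg : (↑g : Matrix (Fin 2) (Fin 2) K) = !![(1:K), 1; 0, 1]) (f : Fin l → Fin 2) :
    Tmap K l g (bTS K l f)
      = ∑ S ∈ (Finset.univ.filter fun i => f i = 1).powerset, bTS K l (chiS l S) := by
  classical
  rw [Tmap, bTS, PiTensorProduct.map_tprod]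
  set b : Fin l → (Fin 2 → K) := fun i => if f i = 1 then Pi.basisFun K (Fin 2) 1 else 0 with hb
  set a : Fin l → (Fin 2 → K) := fun _ => Pi.basisFun K (Fin 2) 0 with ha
  have h1 : (fun i => Matrix.mulVecLin (↑g : Matrix (Fin 2) (Fin 2) K)
      (Pi.basisFun K (Fin 2) (f i))) = b + a := by
    funext i; rw [hg, mulVecLin_unip]; rfl
  rw [h1, MultilinearMap.map_add_univ]
  rw [← Finset.sum_subset (Finset.subset_univ
      ((Finset.univ.filter fun i => f i = 1).powerset))]
  · refine Finset.sum_congr rfl fun S hS => ?_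
    rw [Finset.mem_powerset] at hS
    congr 1
    funext i
    by_cases hi : i ∈ S
    · have hfi : f i = 1 := by
        have := hS hi; simp only [Finset.mem_filter] at this; exact this.2
      simp [Finset.piecewise, hi, hb, hfi, chiS]
    · simp [Finset.piecewise, hi, ha, chiS]
  · intro S _ hS
    rw [Finset.mem_powerset] at hS
    obtain ⟨i, hiS, hfi⟩ : ∃ i ∈ S, ¬ f i = 1 := by
      by_contra h
      push_neg at h
      refine hS fun i hi => ?_
      simp only [Finset.mem_filter, Finset.mem_univ, true_and]
      exact h i hi
    refine MultilinearMap.map_coord_zero _ i ?_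
    simp [Finset.piecewise, hiS, hb, hfi]

lemma exists_perm_of_wt_eq {f g : Fin l → Fin 2} (h : wtS l f = wtS l g) :
    ∃ σ : Equiv.Perm (Fin l), f = g ∘ σ := by
  have h1 : Fintype.card {i // f i = 1} = Fintype.card {i // g i = 1} := by
    simp only [Fintype.card_subtype]
    exact h
  have h0 : Fintype.card {i // ¬ f i = 1} = Fintype.card {i // ¬ g i = 1} := by
    have a1 := Fintype.card_subtype_compl (fun i : Fin l => f i = 1)
    have a2 := Fintype.card_subtype_compl (fun i : Fin l => g i = 1)
    rw [a1, a2, h1]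
  obtain ⟨e1⟩ := Fintype.card_eq.mp h1
  obtain ⟨e0⟩ := Fintype.card_eq.mp h0
  classical
  refine ⟨(Equiv.sumCompl (fun i => f i = 1)).symm.trans
    ((Equiv.sumCongr e1 e0).trans (Equiv.sumCompl (fun i => g i = 1))), ?_⟩
  funext i
  simp only [Function.comp_apply, Equiv.trans_apply]
  by_cases hi : f i = 1
  · have h2 : (Equiv.sumCompl (fun i => f i = 1)).symm i = Sum.inl ⟨i, hi⟩ := by
      rw [Equiv.symm_apply_eq]; rfl
    rw [h2]
    simp only [Equiv.sumCongr_apply, Sum.map_inl, Equiv.sumCompl_apply_inl]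
    rw [hi, (e1 ⟨i, hi⟩).2]
  · have h2 : (Equiv.sumCompl (fun i => f i = 1)).symm i = Sum.inr ⟨i, hi⟩ := by
      rw [Equiv.symm_apply_eq]; rfl
    rw [h2]
    simp only [Equiv.sumCongr_apply, Sum.map_inr, Equiv.sumCompl_apply_inr]
    have := (e0 ⟨i, hi⟩).2
    omega

lemma card_wt_eq (a : ℕ) :
    (Finset.univ.filter fun f : Fin l → Fin 2 => wtS l f = a).card = l.choose a := by
  classical
  have hpc := Finset.card_powersetCard a (Finset.univ : Finset (Fin l))
  simp only [Finset.card_univ, Fintype.card_fin] at hpc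
  rw [← hpc]
  refine Finset.card_bij' (fun f _ => Finset.univ.filter fun i => f i = 1)
    (fun S _ => fun i => if i ∈ S then 1 else 0) ?_ ?_ ?_ ?_
  · intro f hf
    simp only [Finset.mem_filter, Finset.mem_univ, true_and] at hf
    rw [Finset.mem_powersetCard]
    exact ⟨Finset.subset_univ _, hf⟩
  · intro S hS
    rw [Finset.mem_powersetCard] at hS
    simp only [Finset.mem_filter, Finset.mem_univ, true_and]
    rw [← hS.2]
    unfold wtS
    congr 1
    ext i
    simp only [Finset.mem_filter, Finset.mem_univ, true_and]
    split <;> simp_all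
  · intro f _
    funext i
    simp only [Finset.mem_filter, Finset.mem_univ, true_and]
    split <;> rename_i h
    · exact h.symm
    · have : f i = 0 := by omega
      exact this.symm
  · intro S _
    ext i
    simp only [Finset.mem_filter, Finset.mem_univ, true_and]
    split <;> simp_all

lemma exists_good_t (hcard : ((1 + 2 * l : ℕ) : Cardinal) < Cardinal.mk K) :
    ∃ t : K, t ≠ 0 ∧ ∀ k, 1 ≤ k → k ≤ 2 * l → t ^ k ≠ 1 := by
  cases finite_or_infinite K with
  | inl hfin =>
    have : Fintype K := Fintype.ofFinite K
    classical
    have hc : 1 + 2 * l < Fintype.card K := by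
      rw [Cardinal.mk_fintype] at hcard
      exact_mod_cast hcard
    obtain ⟨g, hg⟩ := IsCyclic.exists_generator (α := Kˣ)
    have hord : orderOf g = Fintype.card K - 1 := by
      rw [orderOf_eq_card_of_forall_mem_zpowers hg, Nat.card_units, Nat.card_eq_fintype_card]
    refine ⟨(g : K), Units.ne_zero g, fun k hk1 hk2 h => ?_⟩
    have : (g ^ k : Kˣ) = 1 := by
      ext
      push_cast
      exact h
    have hdvd := orderOf_dvd_of_pow_eq_one this
    have := Nat.le_of_dvd (by omega) hdvd
    omega
  | inr hinf =>
    classical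
    have hfin : (({0} ∪ ⋃ k ∈ Finset.Icc 1 (2 * l), {x : K | x ^ k = 1}) : Set K).Finite := by
      refine (Set.finite_singleton 0).union ?_
      refine Set.Finite.biUnion (Finset.finite_toSet _) fun k hk => ?_
      simp only [Finset.coe_Icc, Set.mem_Icc, Finset.mem_coe, Finset.mem_Icc] at hk
      refine Set.Finite.subset (Polynomial.nthRoots k (1 : K)).toFinset.finite_toSet ?_
      intro x hx
      simp only [Multiset.mem_toFinset, Finset.mem_coe]
      rw [Polynomial.mem_nthRoots (by omega)]
      exact hx
    obtain ⟨t, ht⟩ := (hfin.infinite_compl).nonempty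
    simp only [Set.mem_compl_iff, Set.mem_union, Set.mem_singleton_iff, Set.mem_iUnion,
      not_or, not_exists, Set.mem_setOf_eq] at ht
    refine ⟨t, ht.1, fun k hk1 hk2 h => ?_⟩
    exact ht.2 k (by simp [Finset.mem_Icc]; omega) h

lemma lam_inj (t : K) (ht0 : t ≠ 0) (htk : ∀ k, 1 ≤ k → k ≤ 2 * l → t ^ k ≠ 1)
    {d d' : ℕ} (hd : d ≤ l) (hd' : d' ≤ l)
    (h : t ^ (l - d) * t⁻¹ ^ d = t ^ (l - d') * t⁻¹ ^ d') : d = d' := by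
  have key : ∀ m n : ℕ, m ≤ l → n ≤ l → m < n →
      t ^ (l - m) * t⁻¹ ^ m = t ^ (l - n) * t⁻¹ ^ n → False := by
    intro m n hm hn hmn heq
    rw [inv_pow, inv_pow] at heq
    have hpm : (t : K) ^ m ≠ 0 := pow_ne_zero _ ht0
    have hpn : (t : K) ^ n ≠ 0 := pow_ne_zero _ ht0
    have heq2 : t ^ (l - m) * t ^ n = t ^ (l - n) * t ^ m := by
      field_simp at heq
      linear_combination heq
    rw [← pow_add, ← pow_add] at heq2
    have hexp : l - m + n = (l - n + m) + 2 * (n - m) := by omega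
    rw [hexp, pow_add] at heq2
    have : t ^ (2 * (n - m)) = 1 := by
      have := mul_left_cancel₀ (pow_ne_zero (l - n + m) ht0)
        (heq2.trans (mul_one _).symm)
      exact this
    exact htk (2 * (n - m)) (by omega) (by omega) this
  rcases lt_trichotomy d d' with hlt | heq | hgt
  · exact (key d d' hd hd' hlt h).elim
  · exact heq
  · exact (key d' d hd' hd hgt h.symm).elim

lemma reindex_bT (σ : Equiv.Perm (Fin l)) (f : Fin l → Fin 2) :
    PiTensorProduct.reindex K (fun _ => (Fin 2 → K)) σ (bTS K l f)
      = bTS K l (f ∘ σ.symm) := by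
  rw [bTS, PiTensorProduct.reindex_tprod]
  rfl

lemma mk_bT_wt_eq {f g : Fin l → Fin 2} (h : wtS l f = wtS l g) :
    (Submodule.Quotient.mk (p := symRel K (Fin 2 → K) l) (bTS K l f))
      = Submodule.Quotient.mk (bTS K l g) := by
  obtain ⟨σ, rfl⟩ := exists_perm_of_wt_eq l h
  rw [Submodule.Quotient.eq]
  apply Submodule.subset_span
  refine ⟨bTS K l g, σ⁻¹, ?_⟩
  rw [reindex_bT]
  have hss : (σ⁻¹ : Equiv.Perm (Fin l)).symm = σ := by
    ext i
    simp [Equiv.Perm.inv_def]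
  rw [hss]

lemma psi_reindex (σ : Equiv.Perm (Fin l)) (f : Fin l → Fin 2) :
    (psiS K l f) ∘ₗ (PiTensorProduct.reindex K (fun _ => (Fin 2 → K)) σ).toLinearMap
      = psiS K l (f ∘ σ) := by
  refine ext_bT K l _ _ fun g => ?_
  simp only [LinearMap.comp_apply, LinearEquiv.coe_coe]
  rw [reindex_bT, psiS_bT, psiS_bT]
  congr 1
  apply propext
  constructor
  · rintro rfl; funext i; simp
  · rintro rfl; funext i; simp

lemma psi_Tmap_diag (t : K) (g : Matrix.SpecialLinearGroup (Fin 2) K)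
    (hg : (↑g : Matrix (Fin 2) (Fin 2) K) = !![t, 0; 0, t⁻¹]) (f : Fin l → Fin 2) :
    (psiS K l f) ∘ₗ Tmap K l g
      = (t ^ (l - wtS l f) * t⁻¹ ^ (wtS l f)) • psiS K l f := by
  refine ext_bT K l _ _ fun g' => ?_
  simp only [LinearMap.comp_apply, LinearMap.smul_apply, smul_eq_mul]
  rw [Tmap_diag K l t g hg, map_smul, psiS_bT]
  by_cases h : f = g'
  · subst h; simp [smul_eq_mul]
  · simp [h]

lemma psi0_Tmap_unip (g : Matrix.SpecialLinearGroup (Fin 2) K)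
    (hg : (↑g : Matrix (Fin 2) (Fin 2) K) = !![(1:K), 1; 0, 1]) :
    (psiS K l (chiS l ∅)) ∘ₗ Tmap K l g = ∑ f : Fin l → Fin 2, psiS K l f := by
  classical
  refine ext_bT K l _ _ fun g' => ?_
  simp only [LinearMap.comp_apply, LinearMap.sum_apply]
  rw [Tmap_unip K l g hg, map_sum]
  have h1 : ∀ S ∈ (Finset.univ.filter fun i => g' i = 1).powerset,
      psiS K l (chiS l ∅) (bTS K l (chiS l S)) = if S = ∅ then 1 else 0 := by
    intro S _
    rw [psiS_bT]
    congr 1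
    apply propext
    constructor
    · intro h
      by_contra hne
      obtain ⟨i, hi⟩ := Finset.nonempty_iff_ne_empty.mpr hne
      have := congrFun h i
      simp [chiS, hi] at this
    · rintro rfl; rfl
  rw [Finset.sum_congr rfl h1, Finset.sum_ite_eq' _ ∅ (fun _ => (1:K)),
    if_pos (Finset.mem_powerset.mpr (Finset.empty_subset _))]
  have h2 : ∀ f ∈ (Finset.univ : Finset (Fin l → Fin 2)),
      psiS K l f (bTS K l g') = if f = g' then 1 else 0 := fun f _ => psiS_bT K l f g'
  rw [Finset.sum_congr rfl h2, Finset.sum_ite_eq' _ g' (fun _ => (1:K)),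
    if_pos (Finset.mem_univ g')]

end Aux

/-- in characteristic `p`, if some binomial coefficient `C(l,a)`
(`0 ≤ a ≤ l`) vanishes mod `p` and `|K| > 1 + 2l`, then `Sym^l E` and `Sym_l E`
are not isomorphic as representations of `SL_2(K)`: there is no `K`-linear
equivalence between them commuting with the action of every `g ∈ SL_2(K)`
(the action on the quotient `Sym^l E` being the one induced from `E^{⊗l}`). -/
theorem stmt11 (p : ℕ) [Fact p.Prime] [CharP K p] (l : ℕ)
    (ha : ∃ a ≤ l, Nat.choose l a % p = 0)
    (hcard : ((1 + 2 * l : ℕ) : Cardinal) < Cardinal.mk K) :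
    ¬ ∃ f : SymQ K (Fin 2 → K) l ≃ₗ[K] SymInv K (Fin 2 → K) l,
        ∀ (g : Matrix.SpecialLinearGroup (Fin 2) K) (x : ⨂[K]^l (Fin 2 → K)),
          (↑(f (Submodule.Quotient.mk (Tmap K l g x))) : ⨂[K]^l (Fin 2 → K))
            = Tmap K l g ↑(f (Submodule.Quotient.mk x)) := by
  classical
  obtain ⟨a, hal, hpa⟩ := ha
  obtain ⟨t, ht0, htk⟩ := exists_good_t K l hcard
  rintro ⟨F, hF⟩
  -- the group elements
  have hdeth : Matrix.det !![t, 0; 0, t⁻¹] = 1 := by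
    rw [Matrix.det_fin_two_of]
    field_simp
    norm_num
  have hdetu : Matrix.det !![(1:K), 1; 0, 1] = 1 := by
    rw [Matrix.det_fin_two_of]; ring
  set hgrp : Matrix.SpecialLinearGroup (Fin 2) K := ⟨_, hdeth⟩ with hgrp_def
  set ugrp : Matrix.SpecialLinearGroup (Fin 2) K := ⟨_, hdetu⟩ with ugrp_def
  -- the composite linear map
  set G : (⨂[K]^l (Fin 2 → K)) →ₗ[K] ⨂[K]^l (Fin 2 → K) :=
    (SymInv K (Fin 2 → K) l).subtype ∘ₗ (F : SymQ K (Fin 2 → K) l →ₗ[K] SymInv K (Fin 2 → K) l)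
      ∘ₗ (symRel K (Fin 2 → K) l).mkQ with hG
  have hGapp : ∀ x, G x = ↑(F (Submodule.Quotient.mk x)) := fun x => rfl
  have hGequi : ∀ g x, G (Tmap K l g x) = Tmap K l g (G x) := fun g x => hF g x
  have hGmem : ∀ x, G x ∈ SymInv K (Fin 2 → K) l := fun x => (F _).2
  -- weight-j reference functions
  have hSS : ∀ j : ℕ, ∃ S : Finset (Fin l), j ≤ l → S.card = j := by
    intro j
    by_cases h : j ≤ l
    · obtain ⟨S, _, hS⟩ := Finset.exists_subset_card_eq
        (s := (Finset.univ : Finset (Fin l))) (n := j)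
        (by simpa using h)
      exact ⟨S, fun _ => hS⟩
    · exact ⟨∅, fun hj => absurd hj h⟩
  choose SS hSSc using hSS
  set fS : ℕ → Fin l → Fin 2 := fun j => chiS l (SS j) with hfS
  have hwt : ∀ j, j ≤ l → wtS l (fS j) = j := by
    intro j hj
    rw [show fS j = chiS l (SS j) from rfl, wt_chiS, hSSc j hj]
  -- the invariant vectors
  set y : ℕ → ⨂[K]^l (Fin 2 → K) := fun j => G (bTS K l (fS j)) with hy
  -- eigenvalue computation
  have heig : ∀ j, j ≤ l → Tmap K l hgrp (y j)
      = (t ^ (l - j) * t⁻¹ ^ j) • y j := by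
    intro j hj
    rw [show y j = G (bTS K l (fS j)) from rfl, ← hGequi,
      Tmap_diag K l t hgrp rfl, map_smul, hwt j hj]
  -- support of y j is concentrated in weight j
  have hsupp : ∀ j, j ≤ l → ∀ g : Fin l → Fin 2, wtS l g ≠ j → psiS K l g (y j) = 0 := by
    intro j hj g hg
    have h1 := congrArg (psiS K l g) (heig j hj)
    rw [map_smul] at h1
    have h2 : psiS K l g (Tmap K l hgrp (y j))
        = (t ^ (l - wtS l g) * t⁻¹ ^ (wtS l g)) * psiS K l g (y j) := by
      have := LinearMap.congr_fun (psi_Tmap_diag K l t hgrp rfl g) (y j)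
      simpa using this
    by_contra hne
    have h4 : (t ^ (l - wtS l g) * t⁻¹ ^ (wtS l g)) * psiS K l g (y j)
        = (t ^ (l - j) * t⁻¹ ^ j) * psiS K l g (y j) := by
      rw [← h2, h1, smul_eq_mul]
    have h3 := mul_right_cancel₀ hne h4
    exact hg (lam_inj K l t ht0 htk (wt_le l g) hj h3)
  -- invariance of the coefficients of y j
  have hinv : ∀ j (σ : Equiv.Perm (Fin l)) (g : Fin l → Fin 2),
      psiS K l (g ∘ σ) (y j) = psiS K l g (y j) := by
    intro j σ g
    have hmem := hGmem (bTS K l (fS j))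
    rw [SymInv, Submodule.mem_iInf] at hmem
    have h1 := hmem σ
    rw [LinearMap.mem_eqLocus] at h1
    simp only [LinearEquiv.coe_coe, LinearMap.id_apply] at h1
    have h1' : PiTensorProduct.reindex K (fun _ => (Fin 2 → K)) σ (y j) = y j := h1
    have h2 := LinearMap.congr_fun (psi_reindex K l σ g) (y j)
    simp only [LinearMap.comp_apply, LinearEquiv.coe_coe] at h2
    rw [← h2, h1']
  -- c₀
  set c0 : K := psiS K l (chiS l ∅) (y 0) with hc0
  -- Step A : c₀ ≠ 0
  have hc0ne : c0 ≠ 0 := by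
    intro h0
    have hy0 : y 0 = 0 := by
      rw [repr_expand K l (y 0)]
      refine Finset.sum_eq_zero fun f _ => ?_
      by_cases hf : f = chiS l ∅
      · rw [hf, ← hc0, h0, zero_smul]
      · have : wtS l f ≠ 0 := fun hw => hf ((wt_eq_zero_iff l f).mp hw)
        rw [hsupp 0 (Nat.zero_le l) f this, zero_smul]
    -- so F kills the class of bTS (fS 0), hence bTS (fS 0) ∈ symRel
    have hmk : (Submodule.Quotient.mk (p := symRel K (Fin 2 → K) l) (bTS K l (fS 0))) = 0 := by
      have h1 : (F (Submodule.Quotient.mk (bTS K l (fS 0))) : ⨂[K]^l (Fin 2 → K)) = 0 := by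
        rw [← hGapp]
        exact hy0
      have h2 : F (Submodule.Quotient.mk (bTS K l (fS 0))) = 0 := by
        exact Subtype.ext h1
      exact (LinearEquiv.map_eq_zero_iff F).mp h2
    rw [Submodule.Quotient.mk_eq_zero] at hmk
    -- but the "sum of all coordinates" functional is 1 on bTS and kills symRel
    set Φ : (⨂[K]^l (Fin 2 → K)) →ₗ[K] K := ∑ f : Fin l → Fin 2, psiS K l f with hΦ
    have hΦ_bT : ∀ f, Φ (bTS K l f) = 1 := by
      intro f
      rw [hΦ]
      simp only [LinearMap.sum_apply]
      have := fun g (_ : g ∈ (Finset.univ : Finset (Fin l → Fin 2))) => psiS_bT K l g f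
      rw [Finset.sum_congr rfl this, Finset.sum_ite_eq' _ f (fun _ => (1:K)),
        if_pos (Finset.mem_univ f)]
    have hΦrel : ∀ z ∈ symRel K (Fin 2 → K) l, Φ z = 0 := by
      intro z hz
      have hle : symRel K (Fin 2 → K) l ≤ LinearMap.ker Φ := by
        rw [symRel, Submodule.span_le]
        rintro x ⟨w, σ, rfl⟩
        rw [SetLike.mem_coe, LinearMap.mem_ker, map_sub]
        have hcomp : Φ ∘ₗ (PiTensorProduct.reindex K (fun _ => (Fin 2 → K)) σ).toLinearMap
            = Φ := by
          refine ext_bT K l _ _ fun g => ?_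
          simp only [LinearMap.comp_apply, LinearEquiv.coe_coe]
          rw [reindex_bT, hΦ_bT, hΦ_bT]
        have := LinearMap.congr_fun hcomp w
        simp only [LinearMap.comp_apply, LinearEquiv.coe_coe] at this
        rw [this, sub_self]
      exact LinearMap.mem_ker.mp (hle hz)
    have := hΦrel _ hmk
    rw [hΦ_bT] at this
    exact one_ne_zero this
  -- Step B : the unipotent relation forces c₀ = 0
  have hkey : c0 = 0 := by
    have hequi := hGequi ugrp (bTS K l (fS a))
    -- expand the left-hand side
    have hlhs : G (Tmap K l ugrp (bTS K l (fS a)))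
        = ∑ S ∈ (Finset.univ.filter fun i => fS a i = 1).powerset, y S.card := by
      rw [Tmap_unip K l ugrp rfl, map_sum]
      refine Finset.sum_congr rfl fun S hS => ?_
      have hcard : S.card ≤ l := le_trans (Finset.card_le_card (Finset.subset_univ S))
        (by simp)
      have hwteq : wtS l (chiS l S) = wtS l (fS S.card) := by
        rw [wt_chiS, hwt S.card hcard]
      rw [show y S.card = G (bTS K l (fS S.card)) from rfl, hGapp, hGapp,
        mk_bT_wt_eq K l hwteq]
    -- apply ψ₀ to both sides
    have hψlhs : psiS K l (chiS l ∅) (G (Tmap K l ugrp (bTS K l (fS a)))) = c0 := by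
      rw [hlhs, map_sum]
      have h1 : ∀ S ∈ (Finset.univ.filter fun i => fS a i = 1).powerset,
          psiS K l (chiS l ∅) (y S.card) = if S = ∅ then c0 else 0 := by
        intro S _
        by_cases hS : S = ∅
        · subst hS
          rw [Finset.card_empty, if_pos rfl, hc0]
        · rw [if_neg hS]
          have hcard : S.card ≤ l := le_trans (Finset.card_le_card (Finset.subset_univ S))
            (by simp)
          have hne : wtS l (chiS l ∅) ≠ S.card := by
            rw [wt_chiS, Finset.card_empty]
            exact fun h => hS (Finset.card_eq_zero.mp h.symm)
          exact hsupp S.card hcard (chiS l ∅) hne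
      rw [Finset.sum_congr rfl h1, Finset.sum_ite_eq' _ ∅ (fun _ => c0),
        if_pos (Finset.mem_powerset.mpr (Finset.empty_subset _))]
    have hψrhs : psiS K l (chiS l ∅) (Tmap K l ugrp (y a)) = 0 := by
      have h1 := LinearMap.congr_fun (psi0_Tmap_unip K l ugrp rfl) (y a)
      simp only [LinearMap.comp_apply, LinearMap.sum_apply] at h1
      rw [h1]
      -- split the sum according to the weight
      rw [← Finset.sum_filter_add_sum_filter_not Finset.univ (fun f => wtS l f = a)]
      have h2 : ∑ f ∈ Finset.univ.filter (fun f : Fin l → Fin 2 => ¬ wtS l f = a),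
          psiS K l f (y a) = 0 := by
        refine Finset.sum_eq_zero fun f hf => ?_
        simp only [Finset.mem_filter] at hf
        exact hsupp a hal f hf.2
      have h3 : ∑ f ∈ Finset.univ.filter (fun f : Fin l → Fin 2 => wtS l f = a),
          psiS K l f (y a) = (l.choose a : K) * psiS K l (fS a) (y a) := by
        have hconst : ∀ f ∈ Finset.univ.filter (fun f : Fin l → Fin 2 => wtS l f = a),
            psiS K l f (y a) = psiS K l (fS a) (y a) := by
          intro f hf
          simp only [Finset.mem_filter] at hf
          have hweq : wtS l f = wtS l (fS a) := by rw [hf.2, hwt a hal]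
          obtain ⟨σ, rfl⟩ := exists_perm_of_wt_eq l hweq
          exact hinv a σ (fS a)
        rw [Finset.sum_congr rfl hconst, Finset.sum_const, card_wt_eq, nsmul_eq_mul]
      rw [h2, h3, add_zero]
      have hcast : (l.choose a : K) = 0 := by
        rw [← Nat.cast_zero]
        exact_mod_cast (CharP.cast_eq_zero_iff K p (l.choose a)).mpr
          (Nat.dvd_of_mod_eq_zero hpa)
      rw [hcast, zero_mul]
    calc c0 = psiS K l (chiS l ∅) (G (Tmap K l ugrp (bTS K l (fS a)))) := hψlhs.symm
      _ = psiS K l (chiS l ∅) (Tmap K l ugrp (y a)) := by rw [hequi]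
      _ = 0 := hψrhs
  exact hc0ne hkey

end
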